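/- The subalgebra of R(f) generated by F and H is isomorphic to the universal enveloping algebra of the two-dimensional non-abelian Lie algebra (with basis x, y and bracket [x,y] = -y, matching [H,F] = -F). -/

import Mathlib

open Polynomial

inductive SmithGen : Type
  | E | F | H

open SmithGen in
inductive SmithRel (f : ℂ[X]) : FreeAlgebra ℂ SmithGen → FreeAlgebra ℂ SmithGen → Prop
  | ef : SmithRel f (FreeAlgebra.ι ℂ E * FreeAlgebra.ι ℂ F - FreeAlgebra.ι ℂ F * FreeAlgebra.ι ℂ E)
      (aeval (FreeAlgebra.ι ℂ H) f)
  | he : SmithRel f (FreeAlgebra.ι ℂ H * FreeAlgebra.ι ℂ E - FreeAlgebra.ι ℂ E * FreeAlgebra.ι ℂ H)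
      (FreeAlgebra.ι ℂ E)
  | hf : SmithRel f (FreeAlgebra.ι ℂ H * FreeAlgebra.ι ℂ F - FreeAlgebra.ι ℂ F * FreeAlgebra.ι ℂ H)
      (-FreeAlgebra.ι ℂ F)

/-- Smith's algebra `R(f)`, similar to `U(sl₂)`. -/
abbrev SmithAlgebra (f : ℂ[X]) : Type := RingQuot (SmithRel f)

noncomputable def SmithE (f : ℂ[X]) : SmithAlgebra f :=
  RingQuot.mkAlgHom ℂ (SmithRel f) (FreeAlgebra.ι ℂ SmithGen.E)

noncomputable def SmithF (f : ℂ[X]) : SmithAlgebra f :=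
  RingQuot.mkAlgHom ℂ (SmithRel f) (FreeAlgebra.ι ℂ SmithGen.F)

noncomputable def SmithH (f : ℂ[X]) : SmithAlgebra f :=
  RingQuot.mkAlgHom ℂ (SmithRel f) (FreeAlgebra.ι ℂ SmithGen.H)

/-- The Casimir element `Ω = 2FE + u(H+1)`. -/
noncomputable def SmithOmega (f u : ℂ[X]) : SmithAlgebra f :=
  2 * SmithF f * SmithE f + aeval (SmithH f) (u.comp (X + 1))

/-- `x = E₂₂` and `y = E₁₂` in `gl₂(ℂ)` satisfy `⁅x, y⁆ = -y`; they span a copy of the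
two-dimensional non-abelian Lie algebra. -/
noncomputable def twoDimX : Matrix (Fin 2) (Fin 2) ℂ := Matrix.single 1 1 1

noncomputable def twoDimY : Matrix (Fin 2) (Fin 2) ℂ := Matrix.single 0 1 1

attribute [local instance 100] LieRing.ofAssociativeRing

/-- The two-dimensional non-abelian Lie algebra, realized as the Lie span of `x, y`. -/
noncomputable def twoDimNonabelian : LieSubalgebra ℂ (Matrix (Fin 2) (Fin 2) ℂ) :=
  LieSubalgebra.lieSpan ℂ _ {twoDimX, twoDimY}

/-! ### Auxiliary material -/

set_option maxHeartbeats 1000000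
set_option synthInstance.maxHeartbeats 400000

noncomputable section SmithAux

open SmithGen

/-! #### Matrix computations -/

lemma twoDim_xx : twoDimX * twoDimX = twoDimX := by
  rw [twoDimX, Matrix.single_mul_single_same, mul_one]

lemma twoDim_xy : twoDimX * twoDimY = 0 :=
  Matrix.single_mul_single_of_ne (1:ℂ) 1 1 0 (by decide : (1 : Fin 2) ≠ 0) 1

lemma twoDim_yx : twoDimY * twoDimX = twoDimY := by
  rw [twoDimY, twoDimX, Matrix.single_mul_single_same, mul_one]

lemma twoDim_yy : twoDimY * twoDimY = 0 :=
  Matrix.single_mul_single_of_ne (1:ℂ) 0 1 0 (by decide : (1 : Fin 2) ≠ 0) 1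

lemma twoDim_lie (a b c d : ℂ) :
    ⁅a • twoDimX + b • twoDimY, c • twoDimX + d • twoDimY⁆ = (b * c - a * d) • twoDimY := by
  simp only [Ring.lie_def, add_mul, mul_add, smul_mul_assoc, mul_smul_comm, smul_smul,
    twoDim_xx, twoDim_xy, twoDim_yx, twoDim_yy, smul_zero]
  module

/-- The two-dimensional Lie algebra is just the linear span of `x` and `y`. -/
lemma twoDim_mem_span {m : Matrix (Fin 2) (Fin 2) ℂ} (hm : m ∈ twoDimNonabelian) :
    ∃ a b : ℂ, a • twoDimX + b • twoDimY = m := by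
  let K : LieSubalgebra ℂ (Matrix (Fin 2) (Fin 2) ℂ) :=
    { Submodule.span ℂ {twoDimX, twoDimY} with
      lie_mem' := by
        intro u v hu hv
        change u ∈ Submodule.span ℂ {twoDimX, twoDimY} at hu
        change v ∈ Submodule.span ℂ {twoDimX, twoDimY} at hv
        change ⁅u, v⁆ ∈ Submodule.span ℂ {twoDimX, twoDimY}
        rw [Submodule.mem_span_pair] at hu hv ⊢
        obtain ⟨a, b, rfl⟩ := hu
        obtain ⟨c, d, rfl⟩ := hv
        exact ⟨0, b * c - a * d, by rw [twoDim_lie]; simp⟩ }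
  have hK : twoDimNonabelian ≤ K := by
    rw [twoDimNonabelian, LieSubalgebra.lieSpan_le]
    intro z hz
    rcases hz with h | h <;> subst h
    · exact Submodule.subset_span (by simp)
    · exact Submodule.subset_span (by simp)
  have : m ∈ Submodule.span ℂ {twoDimX, twoDimY} := hK hm
  rwa [Submodule.mem_span_pair] at this

lemma twoDimX_11 : twoDimX 1 1 = 1 := Matrix.single_apply_same 1 1 1
lemma twoDimX_01 : twoDimX 0 1 = 0 :=
  Matrix.single_apply_of_ne 1 1 1 0 1 (by simp)
lemma twoDimY_11 : twoDimY 1 1 = 0 :=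
  Matrix.single_apply_of_ne 0 1 1 1 1 (by simp)
lemma twoDimY_01 : twoDimY 0 1 = 1 := Matrix.single_apply_same 0 1 1

/-! #### The representation of `R(f)` on `ℂ[X][Y]` -/

/-- The representation space: `ℂ[X][Y]`; the outer variable plays the role of `Y`. -/
abbrev SmithV : Type := Polynomial (Polynomial ℂ)

variable (f : ℂ[X])

/-- `λ i = ∑_{j<i} f(X - j)`, the eigenvalue sequence for a generic Verma module. -/
def smithLam (i : ℕ) : ℂ[X] := ∑ j ∈ Finset.range i, f.comp (X - C (j : ℂ))

lemma smithLam_zero : smithLam f 0 = 0 := by simp [smithLam]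

lemma smithLam_succ (i : ℕ) : smithLam f (i + 1) = smithLam f i + f.comp (X - C (i : ℂ)) := by
  rw [smithLam, Finset.sum_range_succ, smithLam]

/-- `F` acts as multiplication by `Y`. -/
def smithFop : SmithV →ₗ[ℂ[X]] SmithV := LinearMap.mulLeft ℂ[X] X

/-- `H` acts as `g·Yⁱ ↦ (X - i)·g·Yⁱ`. -/
def smithHop : SmithV →ₗ[ℂ[X]] SmithV :=
  LinearMap.mulLeft ℂ[X] (C X) - (LinearMap.mulLeft ℂ[X] X).comp derivative

/-- `E` acts as `g·Yⁱ ↦ λ_i·g·Yⁱ⁻¹`. -/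
def smithEop : SmithV →ₗ[ℂ[X]] SmithV where
  toFun p := p.sum fun i g => monomial (i - 1) (smithLam f i * g)
  map_add' p q := sum_add_index p q _ (fun i => by simp) (fun i g h => by rw [mul_add, map_add])
  map_smul' b p := by
    change (b • p).sum (fun i g => monomial (i - 1) (smithLam f i * g))
      = b • p.sum (fun i g => monomial (i - 1) (smithLam f i * g))
    rw [sum_smul_index _ _ _ (fun i => by simp), Polynomial.sum_def,
      Polynomial.sum_def, Finset.smul_sum]
    refine Finset.sum_congr rfl fun i _ => ?_
    rw [smul_monomial, smul_eq_mul, mul_left_comm]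

lemma smithFop_monomial (i : ℕ) (g : ℂ[X]) :
    smithFop (monomial i g) = monomial (i + 1) g := by
  simp [smithFop, X_mul_monomial]

lemma smithHop_monomial (i : ℕ) (g : ℂ[X]) :
    smithHop (monomial i g) = monomial i ((X - C (i : ℂ)) * g) := by
  simp only [smithHop, LinearMap.sub_apply, LinearMap.mulLeft_apply, LinearMap.comp_apply,
    derivative_monomial, C_mul_monomial]
  cases i with
  | zero => simp [sub_mul]
  | succ n =>
    rw [X_mul_monomial, show n + 1 - 1 + 1 = n + 1 from rfl, ← map_sub]
    congr 1
    simp only [Nat.cast_add, Nat.cast_one, map_add, map_one, map_natCast]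
    ring

lemma smithEop_monomial (i : ℕ) (g : ℂ[X]) :
    smithEop f (monomial i g) = monomial (i - 1) (smithLam f i * g) := by
  change (monomial i g).sum (fun i g => monomial (i - 1) (smithLam f i * g)) = _
  exact sum_monomial_index _ _ (by simp)

/-! #### Restricted (ℂ-linear) operators and relations -/

/-- `E` as a `ℂ`-linear endomorphism. -/
def smithEopC : Module.End ℂ SmithV := (smithEop f).restrictScalars ℂ
/-- `F` as a `ℂ`-linear endomorphism. -/
def smithFopC : Module.End ℂ SmithV := smithFop.restrictScalars ℂ
/-- `H` as a `ℂ`-linear endomorphism. -/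
def smithHopC : Module.End ℂ SmithV := smithHop.restrictScalars ℂ

lemma smithEopC_monomial (i : ℕ) (g : ℂ[X]) :
    smithEopC f (monomial i g) = monomial (i - 1) (smithLam f i * g) :=
  smithEop_monomial f i g

lemma smithFopC_monomial (i : ℕ) (g : ℂ[X]) :
    smithFopC (monomial i g) = monomial (i + 1) g := smithFop_monomial i g

lemma smithHopC_monomial (i : ℕ) (g : ℂ[X]) :
    smithHopC (monomial i g) = monomial i ((X - C (i : ℂ)) * g) := smithHop_monomial i g

lemma smithHopC_pow_monomial (n i : ℕ) (g : ℂ[X]) :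
    (smithHopC ^ n) (monomial i g) = monomial i ((X - C (i : ℂ)) ^ n * g) := by
  induction n with
  | zero => simp
  | succ n ih =>
    rw [pow_succ', Module.End.mul_apply, ih, smithHopC_monomial]
    congr 1
    ring

lemma aeval_smithHopC_monomial (p : ℂ[X]) (i : ℕ) (g : ℂ[X]) :
    aeval smithHopC p (monomial i g) = monomial i (p.comp (X - C (i : ℂ)) * g) := by
  induction p using Polynomial.induction_on' with
  | add p q hp hq =>
    rw [map_add, LinearMap.add_apply, hp, hq, add_comp, add_mul, map_add]
  | monomial n a =>
    have hc : ((monomial n a).comp (X - C (i : ℂ))) = C a * (X - C (i : ℂ)) ^ n := by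
      rw [← C_mul_X_pow_eq_monomial, mul_comp, C_comp, pow_comp, X_comp]
    rw [aeval_monomial, Module.End.mul_apply, smithHopC_pow_monomial,
      Module.algebraMap_end_apply, smul_monomial, hc, smul_eq_C_mul, mul_assoc]

/-- Extensionality for `ℂ`-linear endomorphisms of `ℂ[X][Y]`. -/
lemma smithV_ext {T U : Module.End ℂ SmithV}
    (h : ∀ i g, T (monomial i g) = U (monomial i g)) : T = U := by
  apply LinearMap.ext
  intro p
  induction p using Polynomial.induction_on' with
  | add p q hp hq => rw [map_add, map_add, hp, hq]
  | monomial i g => exact h i g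

lemma smith_rel_ef :
    smithEopC f * smithFopC - smithFopC * smithEopC f = aeval smithHopC f := by
  apply smithV_ext
  intro i g
  rw [LinearMap.sub_apply, Module.End.mul_apply, Module.End.mul_apply,
    smithFopC_monomial, smithEopC_monomial, smithEopC_monomial, smithFopC_monomial,
    aeval_smithHopC_monomial]
  cases i with
  | zero => simp [smithLam_zero, smithLam_succ]
  | succ n =>
    rw [show n + 1 - 1 + 1 = n + 1 from rfl, show n + 1 + 1 - 1 = n + 1 from rfl, ← map_sub]
    rw [smithLam_succ f (n+1), add_mul, add_sub_cancel_left]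

lemma smith_rel_he :
    smithHopC * smithEopC f - smithEopC f * smithHopC = smithEopC f := by
  apply smithV_ext
  intro i g
  rw [LinearMap.sub_apply, Module.End.mul_apply, Module.End.mul_apply,
    smithEopC_monomial, smithHopC_monomial, smithHopC_monomial, smithEopC_monomial]
  cases i with
  | zero => simp [smithLam_zero]
  | succ n =>
    rw [show n + 1 - 1 = n from rfl, ← map_sub]
    congr 1
    simp only [Nat.cast_add, Nat.cast_one, map_add, map_one]
    ring

lemma smith_rel_hf :
    smithHopC * smithFopC - smithFopC * smithHopC = -smithFopC := by
  apply smithV_ext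
  intro i g
  rw [LinearMap.sub_apply, Module.End.mul_apply, Module.End.mul_apply,
    smithFopC_monomial, smithHopC_monomial, smithHopC_monomial, smithFopC_monomial,
    LinearMap.neg_apply, smithFopC_monomial, ← map_sub, ← map_neg]
  congr 1
  simp only [Nat.cast_add, Nat.cast_one, map_add, map_one]
  ring

/-- The representation of `R(f)` on `ℂ[X][Y]`. -/
def smithRep : SmithAlgebra f →ₐ[ℂ] Module.End ℂ SmithV :=
  RingQuot.liftAlgHom ℂ ⟨FreeAlgebra.lift ℂ fun s => match s with
    | .E => smithEopC f
    | .F => smithFopC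
    | .H => smithHopC, by
      intro x y h
      match h with
      | .ef =>
        simp only [map_sub, map_mul, FreeAlgebra.lift_ι_apply]
        rw [← Polynomial.aeval_algHom_apply, FreeAlgebra.lift_ι_apply]
        exact smith_rel_ef f
      | .he =>
        simp only [map_sub, map_mul, FreeAlgebra.lift_ι_apply]
        exact smith_rel_he f
      | .hf =>
        simp only [map_sub, map_mul, map_neg, FreeAlgebra.lift_ι_apply]
        exact smith_rel_hf⟩

lemma smithRep_F : smithRep f (SmithF f) = smithFopC := by
  rw [SmithF, smithRep, RingQuot.liftAlgHom_mkAlgHom_apply, FreeAlgebra.lift_ι_apply]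

lemma smithRep_H : smithRep f (SmithH f) = smithHopC := by
  rw [SmithH, smithRep, RingQuot.liftAlgHom_mkAlgHom_apply, FreeAlgebra.lift_ι_apply]

lemma smithFopC_pow_monomial (a i : ℕ) (g : ℂ[X]) :
    (smithFopC ^ a) (monomial i g) = monomial (i + a) g := by
  induction a with
  | zero => simp
  | succ n ih => rw [pow_succ', Module.End.mul_apply, ih, smithFopC_monomial, add_assoc]

lemma smithRep_apply_one (a b : ℕ) :
    smithRep f (SmithF f ^ a * SmithH f ^ b) 1 = monomial a ((X : ℂ[X]) ^ b) := by
  rw [map_mul, map_pow, map_pow, smithRep_F, smithRep_H, Module.End.mul_apply]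
  have h1 : (1 : SmithV) = monomial 0 (1 : ℂ[X]) := (monomial_zero_one).symm
  rw [h1, smithHopC_pow_monomial, smithFopC_pow_monomial]
  simp

/-! #### Linear independence of the monomials `Yᵃ·Xᵇ` -/

lemma smith_w_indep :
    LinearIndependent ℂ fun ab : ℕ × ℕ => (monomial ab.1 ((X : ℂ[X]) ^ ab.2) : SmithV) := by
  have h := ((Polynomial.basisMonomials ℂ).smulTower
      (Polynomial.basisMonomials ℂ[X])).linearIndependent.comp
    (fun ab : ℕ × ℕ => (ab.2, ab.1)) (fun a b hab => by
      simpa [Prod.ext_iff, and_comm] using hab)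
  convert h with ab
  rw [Function.comp_apply, Module.Basis.smulTower_apply, coe_basisMonomials, coe_basisMonomials]
  rw [smul_monomial, smul_eq_mul, mul_one, X_pow_eq_monomial]

/-! #### The subalgebra generated by `F` and `H` -/

/-- The subalgebra of `R(f)` generated by `F` and `H`. -/
abbrev smithSub : Subalgebra ℂ (SmithAlgebra f) := Algebra.adjoin ℂ {SmithF f, SmithH f}

def smithFA : smithSub f := ⟨SmithF f, Algebra.subset_adjoin (by simp)⟩
def smithHA : smithSub f := ⟨SmithH f, Algebra.subset_adjoin (by simp)⟩

lemma smith_hf_rel : SmithH f * SmithF f - SmithF f * SmithH f = -SmithF f := by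
  have h := RingQuot.mkAlgHom_rel ℂ (SmithRel.hf (f := f))
  rw [SmithH, SmithF]
  simpa only [map_sub, map_mul, map_neg] using h

lemma smithHA_mul_FA : smithHA f * smithFA f = smithFA f * smithHA f - smithFA f := by
  apply Subtype.ext
  show SmithH f * SmithF f = SmithF f * SmithH f - SmithF f
  have h := smith_hf_rel f
  rw [sub_eq_iff_eq_add] at h
  rw [h, neg_add_eq_sub]

/-- The Lie algebra homomorphism from the two-dimensional non-abelian Lie algebra into the
subalgebra of `R(f)` generated by `F` and `H`, sending `x ↦ H`, `y ↦ F`. -/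
def smithRho : twoDimNonabelian →ₗ⁅ℂ⁆ smithSub f where
  toFun m := (m : Matrix (Fin 2) (Fin 2) ℂ) 1 1 • smithHA f
    + (m : Matrix (Fin 2) (Fin 2) ℂ) 0 1 • smithFA f
  map_add' m n := by
    have hc : ((m + n : twoDimNonabelian) : Matrix (Fin 2) (Fin 2) ℂ) = (m : Matrix (Fin 2) (Fin 2) ℂ) + n := rfl
    simp only [hc, Matrix.add_apply, add_smul]
    rw [add_add_add_comm]
  map_smul' c m := by
    have hc : ((c • m : twoDimNonabelian) : Matrix (Fin 2) (Fin 2) ℂ) = c • (m : Matrix (Fin 2) (Fin 2) ℂ) := rfl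
    simp only [hc, Matrix.smul_apply, smul_eq_mul, RingHom.id_apply, mul_smul]
    rw [smul_add]
  map_lie' {m n} := by
    obtain ⟨a, b, hm⟩ := twoDim_mem_span m.2
    obtain ⟨c, d, hn⟩ := twoDim_mem_span n.2
    have hb : ((⁅m, n⁆ : twoDimNonabelian) : Matrix (Fin 2) (Fin 2) ℂ)
        = (b * c - a * d) • twoDimY := by
      rw [LieSubalgebra.coe_bracket, ← hm, ← hn, twoDim_lie]
    simp only [hb, ← hm, ← hn, Matrix.smul_apply, Matrix.add_apply, twoDimX_11, twoDimX_01,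
      twoDimY_11, twoDimY_01, smul_eq_mul, mul_zero, mul_one, zero_smul, add_zero, zero_add]
    rw [Ring.lie_def]
    simp only [add_mul, mul_add, smul_mul_assoc, mul_smul_comm, smul_smul, smithHA_mul_FA]
    module

def twoDimXel : twoDimNonabelian := ⟨twoDimX, LieSubalgebra.subset_lieSpan (by simp)⟩
def twoDimYel : twoDimNonabelian := ⟨twoDimY, LieSubalgebra.subset_lieSpan (by simp)⟩

/-- The canonical map `U(L) → ⟨F, H⟩ ⊆ R(f)`. -/
def smithPsi : UniversalEnvelopingAlgebra ℂ twoDimNonabelian →ₐ[ℂ] smithSub f :=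
  UniversalEnvelopingAlgebra.lift ℂ (smithRho f)

lemma smithPsi_x :
    smithPsi f (UniversalEnvelopingAlgebra.ι ℂ twoDimXel) = smithHA f := by
  rw [smithPsi, UniversalEnvelopingAlgebra.lift_ι_apply]
  show ((twoDimXel : Matrix (Fin 2) (Fin 2) ℂ) 1 1) • smithHA f
    + ((twoDimXel : Matrix (Fin 2) (Fin 2) ℂ) 0 1) • smithFA f = smithHA f
  rw [show ((twoDimXel : twoDimNonabelian) : Matrix (Fin 2) (Fin 2) ℂ) = twoDimX from rfl,
    twoDimX_11, twoDimX_01, one_smul, zero_smul, add_zero]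

lemma smithPsi_y :
    smithPsi f (UniversalEnvelopingAlgebra.ι ℂ twoDimYel) = smithFA f := by
  rw [smithPsi, UniversalEnvelopingAlgebra.lift_ι_apply]
  show ((twoDimYel : Matrix (Fin 2) (Fin 2) ℂ) 1 1) • smithHA f
    + ((twoDimYel : Matrix (Fin 2) (Fin 2) ℂ) 0 1) • smithFA f = smithFA f
  rw [show ((twoDimYel : twoDimNonabelian) : Matrix (Fin 2) (Fin 2) ℂ) = twoDimY from rfl,
    twoDimY_11, twoDimY_01, one_smul, zero_smul, zero_add]

/-! #### `U(L)` is spanned by ordered monomials `yᵃxᵇ` -/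

/-- `x` as an element of the enveloping algebra. -/
noncomputable abbrev uX : UniversalEnvelopingAlgebra ℂ twoDimNonabelian :=
  UniversalEnvelopingAlgebra.ι ℂ twoDimXel
/-- `y` as an element of the enveloping algebra. -/
noncomputable abbrev uY : UniversalEnvelopingAlgebra ℂ twoDimNonabelian :=
  UniversalEnvelopingAlgebra.ι ℂ twoDimYel

lemma twoDim_lie_el : ⁅twoDimXel, twoDimYel⁆ = -twoDimYel := by
  apply Subtype.ext
  rw [LieSubalgebra.coe_bracket]
  show ⁅twoDimX, twoDimY⁆ = -twoDimY
  rw [Ring.lie_def, twoDim_xy, twoDim_yx, zero_sub]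

lemma uX_mul_uY : uX * uY = uY * uX - uY := by
  have hneg : (UniversalEnvelopingAlgebra.ι ℂ) (-twoDimYel) = -uY := by
    rw [← neg_one_smul ℂ twoDimYel, map_smul, neg_one_smul]
  have h := (UniversalEnvelopingAlgebra.ι ℂ).map_lie twoDimXel twoDimYel
  rw [twoDim_lie_el, hneg, Ring.lie_def] at h
  have h2 : uX * uY - uY * uX = -uY := h.symm
  rw [sub_eq_iff_eq_add] at h2
  rw [h2, neg_add_eq_sub]

lemma uX_mul_uY_pow (a : ℕ) : uX * uY ^ a = uY ^ a * uX - (a : ℂ) • uY ^ a := by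
  induction a with
  | zero => simp
  | succ n ih =>
    rw [pow_succ, ← mul_assoc, ih, sub_mul, mul_assoc, uX_mul_uY, smul_mul_assoc, mul_sub,
      ← mul_assoc, ← pow_succ]
    push_cast
    module

/-- The span of the ordered monomials `yᵃxᵇ`. -/
noncomputable def smithSpan : Submodule ℂ (UniversalEnvelopingAlgebra ℂ twoDimNonabelian) :=
  Submodule.span ℂ (Set.range fun ab : ℕ × ℕ => uY ^ ab.1 * uX ^ ab.2)

lemma mem_smithSpan_gen (a b : ℕ) : uY ^ a * uX ^ b ∈ smithSpan :=
  Submodule.subset_span ⟨(a, b), rfl⟩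

lemma smithSpan_mul_uX {s} (hs : s ∈ smithSpan) : s * uX ∈ smithSpan := by
  induction hs using Submodule.span_induction with
  | mem z hz =>
    obtain ⟨⟨a, b⟩, rfl⟩ := hz
    rw [mul_assoc, ← pow_succ]
    exact mem_smithSpan_gen a (b + 1)
  | zero => rw [zero_mul]; exact zero_mem _
  | add u v hu hv ihu ihv => rw [add_mul]; exact add_mem ihu ihv
  | smul c u hu ihu => rw [smul_mul_assoc]; exact Submodule.smul_mem _ _ ihu

lemma uX_mul_smithSpan {s} (hs : s ∈ smithSpan) : uX * s ∈ smithSpan := by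
  induction hs using Submodule.span_induction with
  | mem z hz =>
    obtain ⟨⟨a, b⟩, rfl⟩ := hz
    rw [← mul_assoc, uX_mul_uY_pow, sub_mul, mul_assoc, ← pow_succ', smul_mul_assoc]
    exact sub_mem (mem_smithSpan_gen a (b + 1))
      (Submodule.smul_mem _ _ (mem_smithSpan_gen a b))
  | zero => rw [mul_zero]; exact zero_mem _
  | add u v hu hv ihu ihv => rw [mul_add]; exact add_mem ihu ihv
  | smul c u hu ihu => rw [mul_smul_comm]; exact Submodule.smul_mem _ _ ihu

lemma uY_mul_smithSpan {s} (hs : s ∈ smithSpan) : uY * s ∈ smithSpan := by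
  induction hs using Submodule.span_induction with
  | mem z hz =>
    obtain ⟨⟨a, b⟩, rfl⟩ := hz
    rw [← mul_assoc, ← pow_succ']
    exact mem_smithSpan_gen (a + 1) b
  | zero => rw [mul_zero]; exact zero_mem _
  | add u v hu hv ihu ihv => rw [mul_add]; exact add_mem ihu ihv
  | smul c u hu ihu => rw [mul_smul_comm]; exact Submodule.smul_mem _ _ ihu

lemma uXpow_mul_uYpow_mem (b c : ℕ) : uX ^ b * uY ^ c ∈ smithSpan := by
  induction b with
  | zero =>
    rw [pow_zero, one_mul]
    simpa using mem_smithSpan_gen c 0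
  | succ n ih =>
    rw [pow_succ', mul_assoc]
    exact uX_mul_smithSpan ih

lemma smithSpan_mul_uXpow {s} (hs : s ∈ smithSpan) (d : ℕ) : s * uX ^ d ∈ smithSpan := by
  induction d with
  | zero => rw [pow_zero, mul_one]; exact hs
  | succ n ih => rw [pow_succ, ← mul_assoc]; exact smithSpan_mul_uX ih

lemma uYpow_mul_smithSpan (a : ℕ) {s} (hs : s ∈ smithSpan) : uY ^ a * s ∈ smithSpan := by
  induction a with
  | zero => rw [pow_zero, one_mul]; exact hs
  | succ n ih => rw [pow_succ', mul_assoc]; exact uY_mul_smithSpan ih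

lemma smithSpan_mul {s t} (hs : s ∈ smithSpan) (ht : t ∈ smithSpan) : s * t ∈ smithSpan := by
  induction hs using Submodule.span_induction with
  | mem z hz =>
    obtain ⟨⟨a, b⟩, rfl⟩ := hz
    induction ht using Submodule.span_induction with
    | mem w hw =>
      obtain ⟨⟨c, d⟩, rfl⟩ := hw
      have h1 : uY ^ a * uX ^ b * (uY ^ c * uX ^ d)
          = uY ^ a * (uX ^ b * uY ^ c * uX ^ d) := by
        rw [mul_assoc, mul_assoc]
      rw [h1]
      exact uYpow_mul_smithSpan a (smithSpan_mul_uXpow (uXpow_mul_uYpow_mem b c) d)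
    | zero => rw [mul_zero]; exact zero_mem _
    | add u v hu hv ihu ihv => rw [mul_add]; exact add_mem ihu ihv
    | smul c u hu ihu => rw [mul_smul_comm]; exact Submodule.smul_mem _ _ ihu
  | zero => rw [zero_mul]; exact zero_mem _
  | add u v hu hv ihu ihv => rw [add_mul]; exact add_mem ihu ihv
  | smul c u hu ihu => rw [smul_mul_assoc]; exact Submodule.smul_mem _ _ ihu

/-! #### `U(L)` is generated by the image of `ι` -/

lemma uea_adjoin_top :
    Algebra.adjoin ℂ (Set.range (UniversalEnvelopingAlgebra.ι ℂ (L := twoDimNonabelian))) = ⊤ := by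
  set B := Algebra.adjoin ℂ (Set.range (UniversalEnvelopingAlgebra.ι ℂ (L := twoDimNonabelian)))
    with hB
  let ρB : twoDimNonabelian →ₗ⁅ℂ⁆ B :=
    { toFun := fun m => ⟨UniversalEnvelopingAlgebra.ι ℂ m, Algebra.subset_adjoin ⟨m, rfl⟩⟩
      map_add' := fun m n => Subtype.ext (by simp)
      map_smul' := fun c m => Subtype.ext (by simp)
      map_lie' := fun {m n} => Subtype.ext (by
        show (UniversalEnvelopingAlgebra.ι ℂ) ⁅m, n⁆ = _
        rw [LieHom.map_lie, Ring.lie_def]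
        rfl) }
  let g := UniversalEnvelopingAlgebra.lift ℂ ρB
  have key : B.val.comp g = AlgHom.id ℂ _ := by
    apply UniversalEnvelopingAlgebra.hom_ext ℂ
    apply LieHom.ext
    intro m
    show B.val (g (UniversalEnvelopingAlgebra.ι ℂ m)) = UniversalEnvelopingAlgebra.ι ℂ m
    rw [show g (UniversalEnvelopingAlgebra.ι ℂ m) = ρB m from
      UniversalEnvelopingAlgebra.lift_ι_apply ℂ ρB m]
    rfl
  rw [eq_top_iff]
  intro u _
  have h2 : B.val (g u) = u := DFunLike.congr_fun key u
  exact h2 ▸ (g u).2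

lemma smithSpan_top (u : UniversalEnvelopingAlgebra ℂ twoDimNonabelian) : u ∈ smithSpan := by
  have hu : u ∈ Algebra.adjoin ℂ
      (Set.range (UniversalEnvelopingAlgebra.ι ℂ (L := twoDimNonabelian))) := by
    rw [uea_adjoin_top]; trivial
  induction hu using Algebra.adjoin_induction with
  | mem z hz =>
    obtain ⟨m, rfl⟩ := hz
    obtain ⟨a, b, hab⟩ := twoDim_mem_span m.2
    have hm : m = a • twoDimXel + b • twoDimYel := Subtype.ext (by
      show (m : Matrix (Fin 2) (Fin 2) ℂ) = a • twoDimX + b • twoDimY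
      exact hab.symm)
    have hX : uX ∈ smithSpan := by simpa using mem_smithSpan_gen 0 1
    have hY : uY ∈ smithSpan := by simpa using mem_smithSpan_gen 1 0
    rw [hm, map_add, map_smul, map_smul]
    exact add_mem (Submodule.smul_mem _ _ hX) (Submodule.smul_mem _ _ hY)
  | algebraMap r =>
    rw [Algebra.algebraMap_eq_smul_one]
    have h1 : (1 : UniversalEnvelopingAlgebra ℂ twoDimNonabelian) ∈ smithSpan := by
      simpa using mem_smithSpan_gen 0 0
    exact Submodule.smul_mem _ _ h1
  | add x y hx hy ihx ihy => exact add_mem ihx ihy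
  | mul x y hx hy ihx ihy => exact smithSpan_mul ihx ihy

/-! #### Injectivity and surjectivity of `ψ` -/

/-- Evaluation `U(L) → ℂ[X][Y]`, `u ↦ ρ(ψ(u))(1)`. -/
def smithT : UniversalEnvelopingAlgebra ℂ twoDimNonabelian →ₗ[ℂ] SmithV :=
  (LinearMap.applyₗ (1 : SmithV)).comp ((smithRep f).toLinearMap.comp
    (((smithSub f).val.toLinearMap).comp (smithPsi f).toLinearMap))

lemma smithT_apply (u : UniversalEnvelopingAlgebra ℂ twoDimNonabelian) :
    smithT f u = smithRep f ((smithPsi f u : smithSub f) : SmithAlgebra f) 1 := rfl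

lemma smithT_gen (a b : ℕ) :
    smithT f (uY ^ a * uX ^ b) = monomial a ((X : ℂ[X]) ^ b) := by
  rw [smithT_apply]
  have h1 : smithPsi f (uY ^ a * uX ^ b) = smithFA f ^ a * smithHA f ^ b := by
    rw [map_mul, map_pow, map_pow, smithPsi_x, smithPsi_y]
  rw [h1]
  have h2 : ((smithFA f ^ a * smithHA f ^ b : smithSub f) : SmithAlgebra f)
      = SmithF f ^ a * SmithH f ^ b := by
    push_cast
    rfl
  rw [h2, smithRep_apply_one]

lemma smithPsi_inj : Function.Injective (smithPsi f) := by
  rw [injective_iff_map_eq_zero]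
  intro u hu
  have hS := smithSpan_top u
  rw [smithSpan, Finsupp.mem_span_range_iff_exists_finsupp] at hS
  obtain ⟨c, hc⟩ := hS
  have hT : smithT f u = 0 := by
    rw [smithT_apply, hu]
    simp
  rw [← hc, map_finsuppSum] at hT
  simp_rw [map_smul, smithT_gen] at hT
  have hlc : Finsupp.linearCombination ℂ
      (fun ab : ℕ × ℕ => (monomial ab.1 ((X : ℂ[X]) ^ ab.2) : SmithV)) c = 0 := by
    rw [Finsupp.linearCombination_apply]
    exact hT
  have hc0 := linearIndependent_iff.mp smith_w_indep c hlc
  rw [← hc, hc0, Finsupp.sum_zero_index]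

lemma smithPsi_surj : Function.Surjective (smithPsi f) := by
  rintro ⟨z, hz⟩
  induction hz using Algebra.adjoin_induction with
  | mem w hw =>
    rcases hw with h | h
    · exact ⟨UniversalEnvelopingAlgebra.ι ℂ twoDimYel, by rw [smithPsi_y]; exact Subtype.ext h.symm⟩
    · exact ⟨UniversalEnvelopingAlgebra.ι ℂ twoDimXel, by rw [smithPsi_x]; exact Subtype.ext h.symm⟩
  | algebraMap r =>
    exact ⟨algebraMap ℂ _ r, by rw [AlgHom.commutes]; rfl⟩
  | add x y hx hy ihx ihy =>
    obtain ⟨u, hu⟩ := ihx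
    obtain ⟨v, hv⟩ := ihy
    exact ⟨u + v, by rw [map_add, hu, hv]; rfl⟩
  | mul x y hx hy ihx ihy =>
    obtain ⟨u, hu⟩ := ihx
    obtain ⟨v, hv⟩ := ihy
    exact ⟨u * v, by rw [map_mul, hu, hv]; rfl⟩

end SmithAux

/-- The subalgebra of `R(f)` generated by `F` and `H` is isomorphic to the universal
enveloping algebra of the two-dimensional non-abelian Lie algebra, with `H ↦ x`, `F ↦ y`
(where `⁅x, y⁆ = -y`, matching `[H, F] = -F`). -/
theorem smith_RFH_iso_uea (f : ℂ[X]) :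
    ∃ e : Algebra.adjoin ℂ {SmithF f, SmithH f} ≃ₐ[ℂ]
        UniversalEnvelopingAlgebra ℂ twoDimNonabelian,
      e ⟨SmithH f, Algebra.subset_adjoin (by simp)⟩ =
          UniversalEnvelopingAlgebra.ι ℂ ⟨twoDimX, LieSubalgebra.subset_lieSpan (by simp)⟩ ∧
      e ⟨SmithF f, Algebra.subset_adjoin (by simp)⟩ =
          UniversalEnvelopingAlgebra.ι ℂ ⟨twoDimY, LieSubalgebra.subset_lieSpan (by simp)⟩ := by
  refine ⟨(AlgEquiv.ofBijective (smithPsi f) ⟨smithPsi_inj f, smithPsi_surj f⟩).symm, ?_, ?_⟩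
  · rw [AlgEquiv.symm_apply_eq]
    show smithHA f = _
    exact (smithPsi_x f).symm
  · rw [AlgEquiv.symm_apply_eq]
    show smithFA f = _
    exact (smithPsi_y f).symm
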